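/- Let G be an almost simple group with socle T and let R be a Sylow r-subgroup of G with R ∩ T ≠ 1. Then there exists a maximal subgroup H of G containing R such that H is core-free (T ⊄ H) and N_G(R) ≤ H. -/

import Mathlib

open Subgroup

/-- If `T` is normal, the relative index of any `R` in `T` divides the index of `R`. -/
theorem aux_relindex_dvd_index {G : Type*} [Group G] [Finite G]
    (R T : Subgroup G) [T.Normal] : R.relIndex T ∣ R.index := by
  have h1 : R.relIndex (T ⊓ (R ⊔ T)) * T.relIndex (R ⊔ T) = (R ⊓ T).relIndex (R ⊔ T) :=
    relIndex_inf_mul_relIndex R T (R ⊔ T)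
  rw [inf_eq_left.mpr le_sup_right] at h1
  have h2 : T.relIndex (R ⊔ T) = (R ⊓ T).relIndex R := by
    rw [relIndex_sup_right, ← inf_relIndex_right, inf_comm]
  have h3 : (R ⊓ T).relIndex R * R.relIndex (R ⊔ T) = (R ⊓ T).relIndex (R ⊔ T) :=
    relIndex_mul_relIndex _ _ _ inf_le_left le_sup_left
  rw [h2, ← h3] at h1
  have hc : (R ⊓ T).relIndex R ≠ 0 := Subgroup.index_ne_zero_of_finite
  have key : R.relIndex T = R.relIndex (R ⊔ T) :=
    Nat.eq_of_mul_eq_mul_left (Nat.pos_of_ne_zero hc) (by rw [mul_comm, h1])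
  rw [key]
  exact relIndex_dvd_index_of_le le_sup_left

/-- Lemma 2.3: let `G` be an almost simple group with socle `T` and let `R` be a Sylow
`r`-subgroup of `G` with `R ⊓ T ≠ 1`. Then there is a maximal subgroup `H` of `G`
containing `R` which is core-free (i.e. `T ⊄ H`, equivalently the normal core of `H` is
trivial) and satisfies `N_G(R) ≤ H`. -/
theorem stmt_13 {G : Type*} [Group G] [Finite G] (T : Subgroup G) [T.Normal]
    (hsimple : IsSimpleGroup ↥T) (hnonab : ∃ a b : ↥T, a * b ≠ b * a)
    (hcent : Subgroup.centralizer (T : Set G) = ⊥)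
    {r : ℕ} (hr : r.Prime) (R : Sylow r G)
    (hRT : (R : Subgroup G) ⊓ T ≠ ⊥) :
    ∃ H : Subgroup G, IsCoatom H ∧ (R : Subgroup G) ≤ H ∧ ¬ T ≤ H ∧
      Subgroup.normalizer ((R : Subgroup G) : Set G) ≤ H := by
  haveI : Fact r.Prime := ⟨hr⟩
  set R₀ : Subgroup G := (R : Subgroup G) ⊓ T with hR₀
  have hR₀T : R₀ ≤ T := inf_le_right
  -- `R₀` viewed inside `T` is a Sylow `r`-subgroup of `T`
  have hpg : IsPGroup r (R₀.subgroupOf T) := (R.2.to_inf_left).comap_subtype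
  have hdvd : ¬ r ∣ (R₀.subgroupOf T).index := by
    have heq : (R₀.subgroupOf T).index = (R : Subgroup G).relIndex T :=
      inf_relIndex_right _ _
    rw [heq]
    intro h
    exact R.not_dvd_index (h.trans (aux_relindex_dvd_index _ T))
  let P : Sylow r ↥T := hpg.toSylow hdvd
  have hmap : (P : Subgroup ↥T).map T.subtype = R₀ := by
    show ((R₀.subgroupOf T : Subgroup ↥T)).map T.subtype = R₀
    rw [subgroupOf_map_subtype, inf_eq_left.mpr hR₀T]
  -- Frattini argument
  have hfr : Subgroup.normalizer (R₀ : Set G) ⊔ T = ⊤ := by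
    have := Sylow.normalizer_sup_eq_top P
    rwa [hmap] at this
  -- `N_G(R) ≤ N_G(R₀)`
  have hnle : Subgroup.normalizer ((R : Subgroup G) : Set G) ≤ Subgroup.normalizer (R₀ : Set G) := by
    intro g hg
    rw [mem_normalizer_iff] at hg ⊢
    intro h
    simp only [hR₀, Subgroup.mem_inf]
    constructor
    · rintro ⟨h1, h2⟩
      exact ⟨(hg h).mp h1, ‹T.Normal›.conj_mem h h2 g⟩
    · rintro ⟨h1, h2⟩
      refine ⟨(hg h).mpr h1, ?_⟩
      have h3 := ‹T.Normal›.conj_mem _ h2 g⁻¹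
      have h4 : g⁻¹ * (g * h * g⁻¹) * g⁻¹⁻¹ = h := by group
      rwa [h4] at h3
  -- `N_G(R₀)` is proper
  have hproper : Subgroup.normalizer (R₀ : Set G) ≠ ⊤ := by
    intro htop
    have hnorm : R₀.Normal := Subgroup.normalizer_eq_top_iff.mp htop
    have hnorm' : (R₀.subgroupOf T).Normal := hnorm.subgroupOf T
    rcases hsimple.eq_bot_or_eq_top_of_normal _ hnorm' with hbot | htop'
    · apply hRT
      have := congrArg (Subgroup.map T.subtype) hbot
      rwa [subgroupOf_map_subtype, inf_eq_left.mpr hR₀T, Subgroup.map_bot] at this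
    · -- then `T ≤ R`, so `T` is an `r`-group, hence has nontrivial center,
      -- contradicting simplicity + nonabelianity
      have hTR : T ≤ (R : Subgroup G) :=
        le_trans (subgroupOf_eq_top.mp htop') inf_le_left
      have hpT : IsPGroup r ↥T := R.2.to_le hTR
      haveI : Nontrivial ↥T := hsimple.toNontrivial
      have hcnt : Nontrivial (Subgroup.center ↥T) := hpT.center_nontrivial
      have hcne : Subgroup.center ↥T ≠ ⊥ :=
        (Subgroup.nontrivial_iff_ne_bot _).mp hcnt
      have hcT : Subgroup.center ↥T = ⊤ :=
        (hsimple.eq_bot_or_eq_top_of_normal _ inferInstance).resolve_left hcne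
      obtain ⟨a, b, hab⟩ := hnonab
      have ha : a ∈ Subgroup.center ↥T := hcT ▸ Subgroup.mem_top a
      exact hab ((Subgroup.mem_center_iff.mp ha b).symm)
  obtain ⟨Hc, hHc, hle⟩ := (eq_top_or_exists_le_coatom (Subgroup.normalizer (R₀ : Set G))).resolve_left hproper
  refine ⟨Hc, hHc, le_trans (le_trans Subgroup.le_normalizer hnle) hle, ?_, le_trans hnle hle⟩
  intro hTH
  exact hHc.1 (eq_top_iff.mpr (hfr ▸ sup_le hle hTH))
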